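/- Let m ≥ 1, let K ∈ ℝ^{m×m} be symmetric positive definite, let X ⊆ ℝ^I be a nonempty compact set, and let k : X → ℝ^m be continuous with k(x) ≠ 0 for every x ∈ X. For ρ > 0 and x ∈ X set M(x, ρ) = (ρK + k(x) k(x)ᵀ)⁻¹ (this matrix is invertible) and define φ_ρ(α, x, y) = (ρKα + k(x) y)ᵀ M(x, ρ) K M(x, ρ) (ρKα + k(x) y) for α ∈ ℝ^m, y ∈ ℝ. Let E = {(α, x, y) ∈ ℝ^m × X × ℝ : αᵀKα + y² k(x)ᵀ K k(x) = 1}. Then for every sequence of positive reals ρ_n → ∞ there exists a subsequence (ρ_{n_j}) such that lim_{j→∞} sup_{(α,x,y) ∈ E} φ_{ρ_{n_j}}(α, x, y) = 1. -/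

import Mathlib

open Matrix Filter

variable {m : ℕ}

lemma aux_vecMulVec_mulVec (u v x : Fin m → ℝ) : vecMulVec u v *ᵥ x = (v ⬝ᵥ x) • u := by
  ext i
  simp [vecMulVec_apply, mulVec, dotProduct, Finset.mul_sum, mul_comm, mul_assoc, mul_left_comm]

lemma aux_smul_posDef {K : Matrix (Fin m) (Fin m) ℝ} (hK : K.PosDef) {r : ℝ} (hr : 0 < r) :
    (r • K).PosDef := by
  refine PosDef.of_dotProduct_mulVec_pos ?_ (fun x hx => ?_)
  · unfold Matrix.IsHermitian; ext i j; simp [conjTranspose_apply]; exact Or.inl (congrFun (congrFun hK.1.eq i) j)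
  · simp only [smul_mulVec, dotProduct_smul, smul_eq_mul]
    exact mul_pos hr (hK.dotProduct_mulVec_pos hx)

lemma aux_vecMulVec_posSemidef (k : Fin m → ℝ) : (vecMulVec k k).PosSemidef := by
  refine PosSemidef.of_dotProduct_mulVec_nonneg ?_ (fun x => ?_)
  · ext i j; simp [conjTranspose_apply, vecMulVec_apply, mul_comm]
  · rw [aux_vecMulVec_mulVec]
    simp only [dotProduct_smul, smul_eq_mul, star_trivial]
    have : x ⬝ᵥ k = k ⬝ᵥ x := dotProduct_comm _ _
    rw [this]
    exact mul_self_nonneg _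

lemma aux_transpose_eq {K : Matrix (Fin m) (Fin m) ℝ} (h : K.IsHermitian) : Kᵀ = K := by
  ext i j; simpa [conjTranspose_apply] using congrFun (congrFun h.eq i) j

lemma aux_dot_symm {K : Matrix (Fin m) (Fin m) ℝ} (h : K.IsHermitian) (a b : Fin m → ℝ) :
    a ⬝ᵥ (K *ᵥ b) = (K *ᵥ a) ⬝ᵥ b := by
  rw [dotProduct_mulVec, ← mulVec_transpose, aux_transpose_eq h]

lemma aux_cs {K : Matrix (Fin m) (Fin m) ℝ} (hK : K.PosSemidef) (a b : Fin m → ℝ) :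
    (a ⬝ᵥ K *ᵥ b) ^ 2 ≤ (a ⬝ᵥ K *ᵥ a) * (b ⬝ᵥ K *ᵥ b) := by
  have hsymm : b ⬝ᵥ K *ᵥ a = a ⬝ᵥ K *ᵥ b := by
    rw [aux_dot_symm hK.1, dotProduct_comm]
  have h : ∀ t : ℝ, 0 ≤ (b ⬝ᵥ K *ᵥ b) * t ^ 2 + (2 * (a ⬝ᵥ K *ᵥ b)) * t + (a ⬝ᵥ K *ᵥ a) := by
    intro t
    have h0 := hK.dotProduct_mulVec_nonneg (a + t • b)
    simp only [star_trivial, mulVec_add, mulVec_smul, dotProduct_add, add_dotProduct,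
      dotProduct_smul, smul_dotProduct, smul_eq_mul] at h0
    rw [hsymm] at h0
    nlinarith [h0]
  have hd : discrim ((b ⬝ᵥ K *ᵥ b)) (2 * (a ⬝ᵥ K *ᵥ b)) (a ⬝ᵥ K *ᵥ a) ≤ 0 := discrim_le_zero (by intro x; have := h x; nlinarith [this])
  unfold discrim at hd
  nlinarith [hd]

lemma aux_A_posDef {K : Matrix (Fin m) (Fin m) ℝ} (hK : K.PosDef) (k : Fin m → ℝ)
    {r : ℝ} (hr : 0 < r) : (r • K + vecMulVec k k).PosDef :=
  (aux_smul_posDef hK hr).add_posSemidef (aux_vecMulVec_posSemidef k)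

lemma aux_c_nonneg {K : Matrix (Fin m) (Fin m) ℝ} (hK : K.PosDef) (k : Fin m → ℝ) :
    0 ≤ k ⬝ᵥ (K⁻¹ *ᵥ k) := by
  simpa using hK.inv.posSemidef.dotProduct_mulVec_nonneg k

lemma aux_key {K : Matrix (Fin m) (Fin m) ℝ} (hK : K.PosDef) (k : Fin m → ℝ)
    {r : ℝ} (hr : 0 < r) (α : Fin m → ℝ) (y : ℝ) :
    (r • (K *ᵥ α) + y • k) ⬝ᵥ
      ((r • K + vecMulVec k k)⁻¹ *ᵥ (K *ᵥ
        ((r • K + vecMulVec k k)⁻¹ *ᵥ (r • (K *ᵥ α) + y • k))))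
    = α ⬝ᵥ K *ᵥ α
      + 2 * ((y - k ⬝ᵥ α) / (r + k ⬝ᵥ (K⁻¹ *ᵥ k))) * (k ⬝ᵥ α)
      + ((y - k ⬝ᵥ α) / (r + k ⬝ᵥ (K⁻¹ *ᵥ k))) ^ 2 * (k ⬝ᵥ (K⁻¹ *ᵥ k)) := by
  set c : ℝ := k ⬝ᵥ (K⁻¹ *ᵥ k) with hc
  have hc0 : 0 ≤ c := aux_c_nonneg hK k
  have hrc : 0 < r + c := by linarith
  set A : Matrix (Fin m) (Fin m) ℝ := r • K + vecMulVec k k with hA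
  have hApd : A.PosDef := aux_A_posDef hK k hr
  have hAdet : IsUnit A.det := (Matrix.isUnit_iff_isUnit_det A).mp hApd.isUnit
  have hKdet : IsUnit K.det := (Matrix.isUnit_iff_isUnit_det K).mp hK.isUnit
  set w : Fin m → ℝ := K⁻¹ *ᵥ k with hw
  have hKw : K *ᵥ w = k := by
    rw [hw, mulVec_mulVec, Matrix.mul_nonsing_inv _ hKdet, one_mulVec]
  set θ : ℝ := (y - k ⬝ᵥ α) / (r + c) with hθ
  set u : Fin m → ℝ := α + θ • w with hu
  set v : Fin m → ℝ := r • (K *ᵥ α) + y • k with hv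
  have hkw : k ⬝ᵥ w = c := rfl
  have hAu : A *ᵥ u = v := by
    have hθrc : θ * (r + c) = y - k ⬝ᵥ α := div_mul_cancel₀ _ hrc.ne'
    rw [hA, hu, hv]
    rw [add_mulVec, mulVec_add, mulVec_add, smul_mulVec, smul_mulVec,
      mulVec_smul, mulVec_smul, aux_vecMulVec_mulVec, aux_vecMulVec_mulVec, hKw, hkw]
    ext i
    simp only [Pi.add_apply, Pi.smul_apply, smul_eq_mul]
    linear_combination (k i) * hθrc
  have hAiv : A⁻¹ *ᵥ v = u := by
    rw [← hAu, mulVec_mulVec, Matrix.nonsing_inv_mul _ hAdet, one_mulVec]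
  have hAinvSymm : (A⁻¹).IsHermitian := (hApd.inv).1
  have step : v ⬝ᵥ (A⁻¹ *ᵥ (K *ᵥ (A⁻¹ *ᵥ v))) = u ⬝ᵥ (K *ᵥ u) := by
    rw [hAiv, aux_dot_symm hAinvSymm, hAiv]
  rw [step, hu]
  have hKθw : K *ᵥ (θ • w) = θ • k := by rw [mulVec_smul, hKw]
  rw [mulVec_add, hKθw]
  have hwKα : w ⬝ᵥ (K *ᵥ α) = k ⬝ᵥ α := by
    rw [aux_dot_symm hK.1, hKw]
  simp only [dotProduct_add, add_dotProduct, dotProduct_smul, smul_dotProduct, smul_eq_mul]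
  rw [hwKα]
  have hαk : α ⬝ᵥ k = k ⬝ᵥ α := dotProduct_comm _ _
  have hwk : w ⬝ᵥ k = c := by rw [dotProduct_comm]
  rw [hαk, hwk]
  ring

lemma aux_cont {m : ℕ} (M : Matrix (Fin m) (Fin m) ℝ) :
    Continuous (fun v : Fin m → ℝ => v ⬝ᵥ (M *ᵥ v)) := by
  simp only [dotProduct, mulVec]
  fun_prop

set_option maxHeartbeats 1000000 in
/-- (Proposition 4, in coordinates.) Along a subsequence of any sequence
of regularization parameters diverging to infinity, the supremum over the normalization
set `E` of the squared-norm function `φ_ρ` converges to `1`. -/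
theorem stmt_1 (m I : ℕ) (hm : 1 ≤ m)
    (K : Matrix (Fin m) (Fin m) ℝ) (hK : K.PosDef)
    (X : Set (EuclideanSpace ℝ (Fin I))) (hXc : IsCompact X) (hXne : X.Nonempty)
    (k : EuclideanSpace ℝ (Fin I) → Fin m → ℝ) (hk : ContinuousOn k X)
    (hk0 : ∀ x ∈ X, k x ≠ 0)
    (ρ : ℕ → ℝ) (hρpos : ∀ n, 0 < ρ n) (hρ : Tendsto ρ atTop atTop) :
    (∀ r : ℝ, 0 < r → ∀ x ∈ X, IsUnit (r • K + vecMulVec (k x) (k x))) ∧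
    ∃ φ : ℕ → ℕ, StrictMono φ ∧
      Tendsto (fun j => sSup { t : ℝ | ∃ α : Fin m → ℝ, ∃ x ∈ X, ∃ y : ℝ,
          α ⬝ᵥ K *ᵥ α + y ^ 2 * (k x ⬝ᵥ K *ᵥ k x) = 1 ∧
          t = (ρ (φ j) • (K *ᵥ α) + y • k x) ⬝ᵥ
              ((ρ (φ j) • K + vecMulVec (k x) (k x))⁻¹ *ᵥ (K *ᵥ
               ((ρ (φ j) • K + vecMulVec (k x) (k x))⁻¹ *ᵥ
                (ρ (φ j) • (K *ᵥ α) + y • k x)))) })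
        atTop (nhds 1) := by
  constructor
  · exact fun r hr x _ => (aux_A_posDef hK (k x) hr).isUnit
  refine ⟨id, strictMono_id, ?_⟩
  simp only [id_eq]
  set S : ℕ → Set ℝ := fun n => { t : ℝ | ∃ α : Fin m → ℝ, ∃ x ∈ X, ∃ y : ℝ,
          α ⬝ᵥ K *ᵥ α + y ^ 2 * (k x ⬝ᵥ K *ᵥ k x) = 1 ∧
          t = (ρ n • (K *ᵥ α) + y • k x) ⬝ᵥ
              ((ρ n • K + vecMulVec (k x) (k x))⁻¹ *ᵥ (K *ᵥ
               ((ρ n • K + vecMulVec (k x) (k x))⁻¹ *ᵥ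
                (ρ n • (K *ᵥ α) + y • k x)))) } with hSdef
  -- extrema of c and d over X
  have hcontc : ContinuousOn (fun x => k x ⬝ᵥ (K⁻¹ *ᵥ k x)) X :=
    (aux_cont K⁻¹).comp_continuousOn hk
  have hcontd : ContinuousOn (fun x => k x ⬝ᵥ (K *ᵥ k x)) X :=
    (aux_cont K).comp_continuousOn hk
  obtain ⟨xc, hxcX, hxc⟩ := hXc.exists_isMaxOn hXne hcontc
  obtain ⟨xd, hxdX, hxd⟩ := hXc.exists_isMinOn hXne hcontd
  set C : ℝ := k xc ⬝ᵥ (K⁻¹ *ᵥ k xc) with hCdef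
  set D : ℝ := k xd ⬝ᵥ (K *ᵥ k xd) with hDdef
  have hC0 : 0 ≤ C := aux_c_nonneg hK (k xc)
  have hD0 : 0 < D := by simpa using hK.dotProduct_mulVec_pos (hk0 xd hxdX)
  have hD0' : (0:ℝ) ≤ 1 / D := by positivity
  set B₁ : ℝ := 1 / D + 3 * C with hB1def
  set B₂ : ℝ := (2 * (1 / D) + 2 * C) * C with hB2def
  have hB10 : 0 ≤ B₁ := by rw [hB1def]; linarith
  have hB20 : 0 ≤ B₂ := by rw [hB2def]; nlinarith [hC0, hD0']
  -- the distinguished point for the lower bound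
  obtain ⟨x0, hx0X⟩ := hXne
  have i0 : Fin m := ⟨0, hm⟩
  have hKii : 0 < K i0 i0 := by
    have h1 := hK.dotProduct_mulVec_pos (x := Pi.single i0 (1:ℝ)) (by
      intro h
      have := congrFun h i0
      simp at this)
    simpa [mulVec_single, single_dotProduct] using h1
  set α0 : Fin m → ℝ := (Real.sqrt (K i0 i0))⁻¹ • (Pi.single i0 1 : Fin m → ℝ) with hα0def
  have hq0 : α0 ⬝ᵥ K *ᵥ α0 = 1 := by
    rw [hα0def]
    simp only [smul_dotProduct, mulVec_smul, dotProduct_smul, smul_eq_mul,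
      mulVec_single, single_dotProduct]
    have hs : Real.sqrt (K i0 i0) * Real.sqrt (K i0 i0) = K i0 i0 :=
      Real.mul_self_sqrt hKii.le
    have hsne : Real.sqrt (K i0 i0) ≠ 0 := by positivity
    simp only [MulOpposite.op_one, one_smul, Matrix.col_apply]
    field_simp
    rw [sq, hs]
  set s0 : ℝ := k x0 ⬝ᵥ α0 with hs0def
  set c0 : ℝ := k x0 ⬝ᵥ (K⁻¹ *ᵥ k x0) with hc0def
  have hc00 : 0 ≤ c0 := aux_c_nonneg hK (k x0)
  set L : ℕ → ℝ := fun n => 1 + 2 * ((0 - s0) / (ρ n + c0)) * s0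
      + ((0 - s0) / (ρ n + c0)) ^ 2 * c0 with hLdef
  set U : ℕ → ℝ := fun n => 1 + B₁ * (ρ n)⁻¹ + B₂ * ((ρ n)⁻¹) ^ 2 with hUdef
  -- upper bound for every element of S n
  have hub : ∀ n, ∀ t ∈ S n, t ≤ U n := by
    intro n t ht
    obtain ⟨α, x, hxX, y, hconstr, hteq⟩ := ht
    have hr := hρpos n
    rw [aux_key hK (k x) hr α y] at hteq
    set q : ℝ := α ⬝ᵥ K *ᵥ α with hq
    set s : ℝ := k x ⬝ᵥ α with hs
    set c : ℝ := k x ⬝ᵥ (K⁻¹ *ᵥ k x) with hc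
    set d : ℝ := k x ⬝ᵥ (K *ᵥ k x) with hd
    have hq0' : 0 ≤ q := by simpa using hK.posSemidef.dotProduct_mulVec_nonneg α
    have hcC : c ≤ C := hxc hxX
    have hc0' : 0 ≤ c := aux_c_nonneg hK (k x)
    have hDd : D ≤ d := hxd hxX
    have hd0 : 0 < d := lt_of_lt_of_le hD0 hDd
    have hy2d0 : 0 ≤ y ^ 2 * d := mul_nonneg (sq_nonneg y) hd0.le
    have hy2d : y ^ 2 * d ≤ 1 := by linarith [hconstr, hq0']
    have hq1 : q ≤ 1 := by linarith [hconstr, hy2d0]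
    have hy2 : y ^ 2 ≤ 1 / D := by
      rw [le_div_iff₀ hD0]
      have := mul_le_mul_of_nonneg_left hDd (sq_nonneg y)
      linarith
    have hs2 : s ^ 2 ≤ c * q := by
      have hw : (K⁻¹ *ᵥ k x) ⬝ᵥ (K *ᵥ α) = s := by
        rw [aux_dot_symm hK.1, mulVec_mulVec, Matrix.mul_nonsing_inv _
          ((Matrix.isUnit_iff_isUnit_det K).mp hK.isUnit), one_mulVec]
      have hwKw : (K⁻¹ *ᵥ k x) ⬝ᵥ (K *ᵥ (K⁻¹ *ᵥ k x)) = c := by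
        rw [mulVec_mulVec, Matrix.mul_nonsing_inv _
          ((Matrix.isUnit_iff_isUnit_det K).mp hK.isUnit), one_mulVec, dotProduct_comm]
      have h := aux_cs hK.posSemidef (K⁻¹ *ᵥ k x) α
      rw [hw, hwKw] at h
      exact h
    have hs2C : s ^ 2 ≤ C := by
      have h1 := mul_le_mul_of_nonneg_left hq1 hc0'
      linarith [hs2, h1, hcC]
    have hrc : 0 < ρ n + c := by linarith
    -- bound the two correction terms
    have h1 : 2 * ((y - s) / (ρ n + c)) * s ≤ B₁ / ρ n := by
      have he : 2 * ((y - s) / (ρ n + c)) * s = (2 * (y - s) * s) / (ρ n + c) := by ring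
      rw [he, div_le_div_iff₀ hrc hr]
      have hnum : 2 * (y - s) * s ≤ B₁ := by
        rw [hB1def]
        nlinarith [sq_nonneg (y - s), hy2, hs2C, hC0, sq_nonneg s]
      have h2' := mul_le_mul_of_nonneg_right hnum hr.le
      have h3' := mul_nonneg hB10 hc0'
      nlinarith [h2', h3']
    have h2 : ((y - s) / (ρ n + c)) ^ 2 * c ≤ B₂ / ρ n ^ 2 := by
      have he : ((y - s) / (ρ n + c)) ^ 2 * c = ((y - s) ^ 2 * c) / (ρ n + c) ^ 2 := by
        rw [div_pow]; ring
      rw [he, div_le_div_iff₀ (by positivity) (by positivity)]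
      have he1 : (y - s) ^ 2 ≤ 2 * (1 / D) + 2 * C := by
        nlinarith [sq_nonneg (y + s), hy2, hs2C]
      have hnum : (y - s) ^ 2 * c ≤ B₂ := by
        rw [hB2def]
        exact mul_le_mul he1 hcC hc0' (by linarith)
      have h2' := mul_le_mul_of_nonneg_right hnum (sq_nonneg (ρ n))
      have h3' : 0 ≤ B₂ * (2 * ρ n * c + c ^ 2) := by
        have : 0 ≤ 2 * ρ n * c + c ^ 2 :=
          add_nonneg (mul_nonneg (by linarith) hc0') (sq_nonneg c)
        exact mul_nonneg hB20 this
      nlinarith [h2', h3']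
    have hUn : U n = 1 + B₁ / ρ n + B₂ / ρ n ^ 2 := by
      rw [hUdef]; ring
    rw [hteq, hUn]
    have := add_le_add (add_le_add hq1 h1) h2
    linarith [this]
  have hU0 : ∀ n, 0 ≤ U n := by
    intro n
    have hr := hρpos n
    have h1 : (0:ℝ) ≤ (ρ n)⁻¹ := by positivity
    have h2 := mul_nonneg hB10 h1
    have h3 := mul_nonneg hB20 (sq_nonneg ((ρ n)⁻¹))
    rw [hUdef]
    linarith
  -- membership of the lower bound value
  have hmem : ∀ n, L n ∈ S n := by
    intro n
    refine ⟨α0, x0, hx0X, 0, by rw [hq0]; ring, ?_⟩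
    rw [aux_key hK (k x0) (hρpos n) α0 0]
    rw [hLdef]
    simp only [← hs0def, ← hc0def, hq0]
  -- bddAbove
  have hbdd : ∀ n, BddAbove (S n) := fun n => ⟨U n, fun t ht => hub n t ht⟩
  -- squeeze
  have hlow : ∀ n, L n ≤ sSup (S n) := fun n => le_csSup (hbdd n) (hmem n)
  have hhigh : ∀ n, sSup (S n) ≤ U n := fun n => Real.sSup_le (hub n) (hU0 n)
  have hLt : Tendsto L atTop (nhds 1) := by
    have hinv : Tendsto (fun n => (ρ n + c0)⁻¹) atTop (nhds 0) :=
      tendsto_inv_atTop_zero.comp (tendsto_atTop_add_const_right atTop c0 hρ)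
    have hcont : Continuous (fun t : ℝ => 1 + 2 * ((0 - s0) * t) * s0
        + ((0 - s0) * t) ^ 2 * c0) := by fun_prop
    have h := (hcont.tendsto 0).comp hinv
    simp only [Function.comp_def] at h
    have h0 : (1 : ℝ) + 2 * ((0 - s0) * 0) * s0 + ((0 - s0) * 0) ^ 2 * c0 = 1 := by ring
    rw [h0] at h
    convert h using 2 with n
    simp only [hLdef, div_eq_mul_inv]
  have hUt : Tendsto U atTop (nhds 1) := by
    have hinv : Tendsto (fun n => (ρ n)⁻¹) atTop (nhds 0) := tendsto_inv_atTop_zero.comp hρ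
    have hcont : Continuous (fun t : ℝ => 1 + B₁ * t + B₂ * t ^ 2) := by fun_prop
    have h := (hcont.tendsto 0).comp hinv
    simp only [Function.comp_def] at h
    have h0 : (1 : ℝ) + B₁ * 0 + B₂ * 0 ^ 2 = 1 := by ring
    rw [h0] at h
    exact h
  exact tendsto_of_tendsto_of_tendsto_of_le_of_le hLt hUt hlow hhigh
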